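/- The map g is integrable: there exists a continuous function H : M → ℝ such that H ∘ φ = H and H ∘ ψ = H (hence H ∘ g = H), and H is not constant on any nonempty open subset of M. -/

import Mathlib

open Real MeasureTheory

noncomputable section

instance : Fact (0 < 2 * π) := ⟨by positivity⟩

/-- The cylinder `(ℝ/2πℤ) × ℝ`. -/
abbrev Cyl : Type := AddCircle (2 * π) × ℝ

/-- The quotient map `ℝ² → Cyl`. -/
def q2 (v : ℝ × ℝ) : Cyl := ((v.1 : AddCircle (2 * π)), v.2)

/-- The lift of a point of the cylinder to the fundamental domain `[-π, π) × ℝ`. -/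
def cylLift (m : Cyl) : ℝ × ℝ :=
  ((AddCircle.equivIco (2 * π) (-π) m.1 : ℝ), m.2)

/-- The Euclidean norm on `ℝ × ℝ`. -/
def eNorm (v : ℝ × ℝ) : ℝ := Real.sqrt (v.1 ^ 2 + v.2 ^ 2)

/-- Rotation of the plane about the origin by angle `a`. -/
def rot (a : ℝ) (v : ℝ × ℝ) : ℝ × ℝ :=
  (Real.cos a * v.1 - Real.sin a * v.2, Real.sin a * v.1 + Real.cos a * v.2)

/-- The planar twist map: rotate `v` about the origin by the angle `α (eNorm v)`. -/
def twist (α : ℝ → ℝ) (v : ℝ × ℝ) : ℝ × ℝ := rot (α (eNorm v)) v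

/-- The twist map descended to the cylinder. -/
def psi (α : ℝ → ℝ) (m : Cyl) : Cyl := q2 (twist α (cylLift m))

/-- The half rotation `(θ, s) ↦ (θ + π, s)` of the cylinder. -/
def phi (m : Cyl) : Cyl := (m.1 + ((π : ℝ) : AddCircle (2 * π)), m.2)

/-- The composition `g = φ ∘ ψ`. -/
def gmap (α : ℝ → ℝ) : Cyl → Cyl := phi ∘ psi α

/-- The image in the cylinder of the open Euclidean unit disk centered at the origin. -/
def Dset : Set Cyl := q2 '' {v : ℝ × ℝ | eNorm v < 1}

/-- The distance on the cylinder induced by the Euclidean metric on `ℝ²`. -/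
def cylDist (x y : Cyl) : ℝ := Real.sqrt (dist x.1 y.1 ^ 2 + dist x.2 y.2 ^ 2)

/-- The hypotheses on the twist angle profile `α`: continuous, non-increasing on `[0, ∞)`,
greater than `0.2` on `[0, 0.7]` and vanishing on `[0.9, ∞)`. -/
structure TwistAngle (α : ℝ → ℝ) : Prop where
  cont : Continuous α
  anti : AntitoneOn α (Set.Ici 0)
  big : ∀ r ∈ Set.Icc (0 : ℝ) 0.7, 0.2 < α r
  zero : ∀ r : ℝ, 0.9 ≤ r → α r = 0

/-! ### Auxiliary lemmas -/

/-- `q2` is a left inverse of `cylLift`. -/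
lemma q2_cylLift (m : Cyl) : q2 (cylLift m) = m :=
  Prod.ext ((AddCircle.equivIco (2 * π) (-π)).symm_apply_apply m.1) rfl

/-- The norm on `AddCircle (2π)` of a small real number. -/
lemma norm_coe_small {y : ℝ} (hy : |y| < π) : ‖(y : AddCircle (2 * π))‖ = |y| := by
  rw [AddCircle.norm_eq]
  have hπ := Real.pi_pos
  have h0 : round ((2 * π)⁻¹ * y) = 0 := by
    rw [round_eq_zero_iff]
    rw [abs_lt] at hy
    have h2 : (0 : ℝ) < 2 * π := by positivity
    constructor
    · rw [inv_mul_eq_div, le_div_iff₀ h2]; nlinarith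
    · rw [inv_mul_eq_div, div_lt_iff₀ h2]; nlinarith
  rw [h0]; simp

/-- The norm on `AddCircle (2π)` of `π`. -/
lemma norm_coe_pi : ‖((π : ℝ) : AddCircle (2 * π))‖ = π := by
  rw [AddCircle.norm_eq]
  have hπ := Real.pi_pos
  have h1 : (2 * π)⁻¹ * π = 1 / 2 := by field_simp
  have h2 : round ((1 : ℝ) / 2) = 1 := by rw [round_eq]; norm_num
  rw [h1, h2]
  push_cast
  rw [abs_of_nonpos (by nlinarith)]; ring

/-- Rotation preserves the Euclidean norm. -/
lemma eNorm_rot (a : ℝ) (v : ℝ × ℝ) : eNorm (rot a v) = eNorm v := by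
  unfold eNorm rot
  congr 1
  have h := sin_sq_add_cos_sq a
  dsimp only
  nlinarith [h]

lemma rot_zero (v : ℝ × ℝ) : rot 0 v = v := by simp [rot]

/-- The first coordinate is bounded by the Euclidean norm. -/
lemma abs_fst_le_eNorm (v : ℝ × ℝ) : |v.1| ≤ eNorm v := by
  rw [← Real.sqrt_sq_eq_abs]
  exact Real.sqrt_le_sqrt (by nlinarith [sq_nonneg v.2])

/-- The first integral: minimum of the distances to the two centers. -/
def Hfun (m : Cyl) : ℝ := min (cylDist m (q2 (0, 0))) (cylDist m (q2 (π, 0)))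

lemma cylDist_eq (x y : Cyl) : cylDist x y = Real.sqrt (dist x.1 y.1 ^ 2 + dist x.2 y.2 ^ 2) := rfl

lemma continuous_Hfun : Continuous Hfun := by
  apply Continuous.min <;>
  · apply Real.continuous_sqrt.comp
    apply Continuous.add <;>
    · apply Continuous.pow
      exact Continuous.dist (by fun_prop) continuous_const

/-- `Hfun` at the image of a point of the small disk is its norm. -/
lemma Hfun_q2 {v : ℝ × ℝ} (hv : eNorm v < 0.9) : Hfun (q2 v) = eNorm v := by
  have hπ3 := Real.pi_gt_three
  have h1 : |v.1| < 0.9 := lt_of_le_of_lt (abs_fst_le_eNorm v) hv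
  have hd0 : dist ((v.1 : ℝ) : AddCircle (2 * π)) (((0 : ℝ) : ℝ) : AddCircle (2 * π)) = |v.1| := by
    have : (((0 : ℝ) : ℝ) : AddCircle (2 * π)) = 0 := by norm_num
    rw [this, dist_zero_right]
    exact norm_coe_small (by linarith)
  have hc0 : cylDist (q2 v) (q2 (0, 0)) = eNorm v := by
    simp only [cylDist, q2]
    rw [hd0, Real.dist_eq, sub_zero, sq_abs, sq_abs]
    rfl
  have hdπ : π - |v.1| ≤ dist ((v.1 : ℝ) : AddCircle (2 * π)) (((π : ℝ) : ℝ) : AddCircle (2 * π)) := by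
    have htri := dist_triangle (0 : AddCircle (2 * π)) ((v.1 : ℝ) : AddCircle (2 * π))
      (((π : ℝ) : ℝ) : AddCircle (2 * π))
    have hz : dist (0 : AddCircle (2 * π)) ((v.1 : ℝ) : AddCircle (2 * π)) = |v.1| := by
      rw [dist_comm, dist_zero_right]; exact norm_coe_small (by linarith)
    have hp : dist (0 : AddCircle (2 * π)) (((π : ℝ) : ℝ) : AddCircle (2 * π)) = π := by
      rw [dist_comm, dist_zero_right]; exact norm_coe_pi
    rw [hz, hp] at htri
    linarith
  have hcπ : 0.9 ≤ cylDist (q2 v) (q2 (π, 0)) := by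
    have h2 : dist ((v.1 : ℝ) : AddCircle (2 * π)) (((π : ℝ) : ℝ) : AddCircle (2 * π)) ≤
        Real.sqrt (dist ((v.1 : ℝ) : AddCircle (2 * π)) (((π : ℝ) : ℝ) : AddCircle (2 * π)) ^ 2
          + dist v.2 (0 : ℝ) ^ 2) := by
      rw [Real.le_sqrt dist_nonneg (by positivity)]
      nlinarith [sq_nonneg (dist v.2 (0 : ℝ))]
    have h3 : cylDist (q2 v) (q2 (π, 0)) = Real.sqrt (dist ((v.1 : ℝ) : AddCircle (2 * π)) (((π : ℝ) : ℝ) : AddCircle (2 * π)) ^ 2 + dist v.2 (0 : ℝ) ^ 2) := rfl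
    rw [h3]
    linarith
  unfold Hfun
  rw [hc0]
  exact min_eq_left (by linarith)

lemma pi_coe_add_pi_coe : ((π : ℝ) : AddCircle (2 * π)) + ((π : ℝ) : AddCircle (2 * π)) = 0 := by
  rw [← AddCircle.coe_add]
  have : π + π = 2 * π := by ring
  rw [this, AddCircle.coe_period]

lemma Hfun_phi (m : Cyl) : Hfun (phi m) = Hfun m := by
  have h0 : (((0, 0) : ℝ × ℝ).1 : AddCircle (2 * π)) = 0 := by
    show (((0 : ℝ)) : AddCircle (2 * π)) = 0; norm_num
  have d1 : dist (phi m).1 (q2 (0, 0)).1 = dist m.1 (q2 (π, 0)).1 := by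
    show dist (m.1 + ((π : ℝ) : AddCircle (2 * π))) (((0 : ℝ) : AddCircle (2 * π))) =
      dist m.1 (((π : ℝ) : AddCircle (2 * π)))
    have : ((0 : ℝ) : AddCircle (2 * π)) = ((π : ℝ) : AddCircle (2 * π)) + ((π : ℝ) : AddCircle (2 * π)) := by
      rw [pi_coe_add_pi_coe]; norm_num
    rw [this, dist_add_right]
  have d2 : dist (phi m).1 (q2 (π, 0)).1 = dist m.1 (q2 (0, 0)).1 := by
    show dist (m.1 + ((π : ℝ) : AddCircle (2 * π))) (((π : ℝ) : AddCircle (2 * π))) =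
      dist m.1 (((0 : ℝ) : AddCircle (2 * π)))
    nth_rewrite 2 [show ((π : ℝ) : AddCircle (2 * π)) = ((0 : ℝ) : AddCircle (2 * π)) + ((π : ℝ) : AddCircle (2 * π)) from by norm_num]
    rw [dist_add_right]
  have e1 : cylDist (phi m) (q2 (0, 0)) = cylDist m (q2 (π, 0)) := by
    rw [cylDist_eq, cylDist_eq, d1]
    rfl
  have e2 : cylDist (phi m) (q2 (π, 0)) = cylDist m (q2 (0, 0)) := by
    rw [cylDist_eq, cylDist_eq, d2]
    rfl
  unfold Hfun
  rw [e1, e2, min_comm]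

lemma Hfun_psi (α : ℝ → ℝ) (hα : TwistAngle α) (m : Cyl) : Hfun (psi α m) = Hfun m := by
  set x := cylLift m with hx
  have hm : q2 x = m := q2_cylLift m
  by_cases h : eNorm x < 0.9
  · have hw : eNorm (twist α x) = eNorm x := eNorm_rot _ _
    show Hfun (q2 (twist α x)) = Hfun m
    rw [Hfun_q2 (by rw [hw]; exact h), hw, ← hm, Hfun_q2 h]
  · have hz : α (eNorm x) = 0 := hα.zero _ (by linarith [not_lt.mp h])
    show Hfun (q2 (twist α x)) = Hfun m
    unfold twist
    rw [hz, rot_zero, hm]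

/-- The min of two square roots with common `+ t²`. -/
lemma min_sqrt_add (A B t : ℝ) (_hA : 0 ≤ A) (_hB : 0 ≤ B) :
    min (Real.sqrt (A + t ^ 2)) (Real.sqrt (B + t ^ 2)) = Real.sqrt (min A B + t ^ 2) := by
  rcases le_total A B with h | h
  · rw [min_eq_left h, min_eq_left (Real.sqrt_le_sqrt (by linarith))]
  · rw [min_eq_right h, min_eq_right (Real.sqrt_le_sqrt (by linarith))]

/-- The fibered formula for `Hfun`. -/
lemma Hfun_eq (θ : AddCircle (2 * π)) (t : ℝ) :
    Hfun (θ, t) = Real.sqrt (min (dist θ (((0 : ℝ) : AddCircle (2 * π))) ^ 2)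
      (dist θ (((π : ℝ) : AddCircle (2 * π))) ^ 2) + t ^ 2) := by
  unfold Hfun
  rw [cylDist_eq, cylDist_eq]
  show min (Real.sqrt (dist θ (((0 : ℝ) : AddCircle (2 * π))) ^ 2 + dist t (0 : ℝ) ^ 2))
      (Real.sqrt (dist θ (((π : ℝ) : AddCircle (2 * π))) ^ 2 + dist t (0 : ℝ) ^ 2)) = _
  rw [Real.dist_eq, sub_zero, sq_abs]
  exact min_sqrt_add _ _ _ (sq_nonneg _) (sq_nonneg _)

/-- g is integrable: there is a continuous first integral H, invariant under
both φ and ψ (hence under g), which is not constant on any nonempty open set. -/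
theorem gmap_integrable (α : ℝ → ℝ) (hα : TwistAngle α) :
    ∃ H : Cyl → ℝ, Continuous H ∧ H ∘ phi = H ∧ H ∘ psi α = H ∧ H ∘ gmap α = H ∧
      ∀ U : Set Cyl, IsOpen U → U.Nonempty → ∃ x ∈ U, ∃ y ∈ U, H x ≠ H y := by
  refine ⟨Hfun, continuous_Hfun, funext Hfun_phi, funext (Hfun_psi α hα), ?_, ?_⟩
  · funext m
    show Hfun (phi (psi α m)) = Hfun m
    rw [Hfun_phi, Hfun_psi α hα]
  · intro U hU ⟨m, hm⟩
    obtain ⟨ε, hε, hball⟩ := Metric.isOpen_iff.mp hU m hm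
    set s := m.2 with hs
    set s' := if 0 ≤ s then s + ε / 2 else s - ε / 2 with hs'
    have hy : (m.1, s') ∈ U := by
      apply hball
      rw [Metric.mem_ball]
      have : dist ((m.1, s') : Cyl) m = max (dist m.1 m.1) (dist s' s) := by
        rw [Prod.dist_eq]
      rw [this, dist_self, Real.dist_eq]
      have : |s' - s| = ε / 2 := by
        rw [hs']
        split_ifs <;> simp [abs_of_nonneg, abs_of_nonpos, le_of_lt hε] <;> linarith
      rw [this]
      simp [lt_max_iff] at *
      linarith
    refine ⟨m, hm, (m.1, s'), hy, ?_⟩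
    have hm' : m = (m.1, s) := rfl
    rw [hm', Hfun_eq, Hfun_eq]
    set c := min (dist m.1 (((0 : ℝ) : AddCircle (2 * π))) ^ 2)
      (dist m.1 (((π : ℝ) : AddCircle (2 * π))) ^ 2) with hc
    have hcnn : 0 ≤ c := le_min (sq_nonneg _) (sq_nonneg _)
    have hss : s ^ 2 < s' ^ 2 := by
      rw [hs']; split_ifs with h <;> nlinarith
    intro heq
    have h1 := Real.sq_sqrt (by positivity : (0:ℝ) ≤ c + s ^ 2)
    have h2 := Real.sq_sqrt (by positivity : (0:ℝ) ≤ c + s' ^ 2)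
    rw [heq] at h1
    rw [h2] at h1
    linarith
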